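/- Let {a_n}, {b_n} ⊂ ℝ³ and {p_n}, {q_n} ⊂ ℝ with a_n − b_n → a_∞ in ℝ³ and p_n − q_n → p_∞ in ℝ. Suppose {r_n} is a bounded sequence in H¹(ℝ³) such that (U(p_n)T_{a_n})^{-1} r_n ⇀ φ weakly and (U(q_n)T_{b_n})^{-1} r_n ⇀ 0 weakly in H¹(ℝ³). Then φ = 0. -/

import Mathlib

open Filter Topology

/-- If `a_n - b_n → a_∞`, `p_n - q_n → p_∞`, `{r_n}` is bounded in `H¹(ℝ³)`,
`(U(p_n)T_{a_n})⁻¹ r_n ⇀ φ` and `(U(q_n)T_{b_n})⁻¹ r_n ⇀ 0` weakly, then `φ = 0`.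
Here `U` is the free Schrödinger group and `T` the translation group on `H = H¹(ℝ³)`,
encoded via the group laws, commutation, and joint strong continuity. -/
theorem stmt4 {H : Type*} [NormedAddCommGroup H] [InnerProductSpace ℂ H]
    (U : ℝ → H ≃ₗᵢ[ℂ] H) (T : EuclideanSpace ℝ (Fin 3) → H ≃ₗᵢ[ℂ] H)
    (hUgrp : ∀ (s t : ℝ) (f : H), U (s + t) f = U s (U t f))
    (hTgrp : ∀ (y z : EuclideanSpace ℝ (Fin 3)) (f : H), T (y + z) f = T y (T z f))
    (hUT : ∀ (t : ℝ) (y : EuclideanSpace ℝ (Fin 3)) (f : H), U t (T y f) = T y (U t f))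
    (hjoint : ∀ f : H,
      Continuous fun ty : ℝ × EuclideanSpace ℝ (Fin 3) => U ty.1 (T ty.2 f))
    (a b : ℕ → EuclideanSpace ℝ (Fin 3)) (p q : ℕ → ℝ)
    (aInf : EuclideanSpace ℝ (Fin 3)) (pInf : ℝ)
    (ha : Tendsto (fun n => a n - b n) atTop (nhds aInf))
    (hp : Tendsto (fun n => p n - q n) atTop (nhds pInf))
    (r : ℕ → H) (C : ℝ) (hbdd : ∀ n, ‖r n‖ ≤ C) (φ : H)
    (h1 : ∀ ψ : H,
      Tendsto (fun n => (inner ℂ ((T (a n)).symm ((U (p n)).symm (r n))) ψ : ℂ))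
        atTop (nhds (inner ℂ φ ψ)))
    (h2 : ∀ ψ : H,
      Tendsto (fun n => (inner ℂ ((T (b n)).symm ((U (q n)).symm (r n))) ψ : ℂ))
        atTop (nhds 0)) :
    φ = 0 := by

  suffices h : ∀ ψ : H, (inner ℂ φ ψ : ℂ) = 0 by
    have := h φ
    rwa [inner_self_eq_zero] at this
  intro ψ
  have hC : (0:ℝ) ≤ C := le_trans (norm_nonneg _) (hbdd 0)
  have key : ∀ n, (inner ℂ ((T (a n)).symm ((U (p n)).symm (r n))) ψ : ℂ)
      = inner ℂ ((T (b n)).symm ((U (q n)).symm (r n))) (U (p n - q n) (T (a n - b n) ψ)) := by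
    intro n
    have e1 : (inner ℂ ((T (a n)).symm ((U (p n)).symm (r n))) ψ : ℂ)
        = inner ℂ (r n) (U (p n) (T (a n) ψ)) := by
      rw [← (T (a n)).inner_map_map, (T (a n)).apply_symm_apply,
          ← (U (p n)).inner_map_map, (U (p n)).apply_symm_apply]
    have e2 : (inner ℂ ((T (b n)).symm ((U (q n)).symm (r n)))
          (U (p n - q n) (T (a n - b n) ψ)) : ℂ)
        = inner ℂ (r n) (U (q n) (T (b n) (U (p n - q n) (T (a n - b n) ψ)))) := by
      rw [← (T (b n)).inner_map_map, (T (b n)).apply_symm_apply,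
          ← (U (q n)).inner_map_map, (U (q n)).apply_symm_apply]
    have e3 : U (q n) (T (b n) (U (p n - q n) (T (a n - b n) ψ))) = U (p n) (T (a n) ψ) := by
      have hq : q n + (p n - q n) = p n := by ring
      have hb : b n + (a n - b n) = a n := by abel
      rw [← hUT (p n - q n) (b n) (T (a n - b n) ψ), ← hUgrp, ← hTgrp, hq, hb]
    rw [e1, e2, e3]
  have hs : Tendsto (fun n => (inner ℂ ((T (b n)).symm ((U (q n)).symm (r n)))
      (U (p n - q n) (T (a n - b n) ψ)) : ℂ)) atTop (nhds 0) := by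
    set w : H := U pInf (T aInf ψ) with hw
    have hψn : Tendsto (fun n => U (p n - q n) (T (a n - b n) ψ)) atTop (nhds w) := by
      exact ((hjoint ψ).tendsto (pInf, aInf)).comp (hp.prodMk_nhds ha)
    have hΔ : Tendsto (fun n => ‖U (p n - q n) (T (a n - b n) ψ) - w‖) atTop (nhds 0) := by
      have : Tendsto (fun n => U (p n - q n) (T (a n - b n) ψ) - w) atTop (nhds (w - w)) :=
        hψn.sub tendsto_const_nhds
      rw [sub_self] at this
      simpa using this.norm
    have hterm2 : Tendsto (fun n => (inner ℂ ((T (b n)).symm ((U (q n)).symm (r n)))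
        (U (p n - q n) (T (a n - b n) ψ) - w) : ℂ)) atTop (nhds 0) := by
      rw [tendsto_zero_iff_norm_tendsto_zero]
      apply squeeze_zero (fun n => norm_nonneg _)
        (fun n => ?_) (g := fun n => C * ‖U (p n - q n) (T (a n - b n) ψ) - w‖)
      · have h0 := hΔ.const_mul C
        simpa using h0
      · calc ‖(inner ℂ ((T (b n)).symm ((U (q n)).symm (r n)))
              (U (p n - q n) (T (a n - b n) ψ) - w) : ℂ)‖
            ≤ ‖(T (b n)).symm ((U (q n)).symm (r n))‖ *
              ‖U (p n - q n) (T (a n - b n) ψ) - w‖ := norm_inner_le_norm _ _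
          _ ≤ C * ‖U (p n - q n) (T (a n - b n) ψ) - w‖ := by
              apply mul_le_mul_of_nonneg_right _ (norm_nonneg _)
              simpa using hbdd n
    have hsum := (h2 w).add hterm2
    rw [add_zero] at hsum
    convert hsum using 2 with n
    rw [inner_sub_right]
    ring
  have h1' := h1 ψ
  simp only [key] at h1'
  exact tendsto_nhds_unique h1' hs
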